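/- Let $X$ and $Z$ be nonempty sets, and let $\nu : X \to \mathbb{R}^n$ and $\psi : Z \to \mathbb{R}^m$ be maps such that the set $\{(\nu(x),1) : x \in X\}$ spans $\mathbb{R}^{n+1}$ and the set $\{(\psi(z),1) : z \in Z\}$ spans $\mathbb{R}^{m+1}$ (i.e. the images of $\nu$ and $\psi$ affinely span $\mathbb{R}^n$ resp. $\mathbb{R}^m$). Suppose $f : Z \to \mathbb{R}^n$, $g : X \to \mathbb{R}^m$, $r : Z \to \mathbb{R}$ and $s : X \to \mathbb{R}$ satisfy $\langle \nu(x), f(z)\rangle + r(z) = \langle \psi(z), g(x)\rangle + s(x)$ for all $x \in X$ and $z \in Z$. Then there exist a matrix $W \in \mathbb{R}^{n \times m}$ and vectors $u \in \mathbb{R}^n$, $v \in \mathbb{R}^m$ such that $f(z) = W\psi(z) + u$ for all $z \in Z$ and $g(x) = W^{\mathsf T}\nu(x) + v$ for all $x \in X$. -/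

import Mathlib

lemma span_coeffs {Z : Type*} {m : ℕ} (ψ : Z → Fin m → ℝ)
    (hψ : Submodule.span ℝ (Set.range (fun z => ((ψ z, (1 : ℝ)) : (Fin m → ℝ) × ℝ))) = ⊤)
    (j : Fin m) :
    ∃ d : Z →₀ ℝ, (∀ k, ∑ z ∈ d.support, d z * ψ z k = (Pi.single j (1:ℝ) : Fin m → ℝ) k) ∧
      (∑ z ∈ d.support, d z = 0) := by
  classical
  have hmem : (((Pi.single j (1:ℝ) : Fin m → ℝ), (0:ℝ)) : (Fin m → ℝ) × ℝ) ∈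
      Submodule.span ℝ (Set.range fun z => ((ψ z, (1:ℝ)) : (Fin m → ℝ) × ℝ)) := by
    rw [hψ]; trivial
  obtain ⟨d, hd⟩ := Finsupp.mem_span_range_iff_exists_finsupp.mp hmem
  rw [Finsupp.sum] at hd
  refine ⟨d, fun k => ?_, ?_⟩
  · have := congrArg (fun p => p.1 k) hd
    simpa [Prod.fst_sum, Finset.sum_apply] using this
  · have := congrArg Prod.snd hd
    simpa [Prod.snd_sum] using this

/-- If `⟨ν x, f z⟩ + r z = ⟨ψ z, g x⟩ + s x` for all `x, z`, and the images of
`ν` resp. `ψ` affinely span `ℝ^n` resp. `ℝ^m` (i.e. `{(ν x, 1)}` spans `ℝ^{n+1}` and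
`{(ψ z, 1)}` spans `ℝ^{m+1}`), then `f` and `g` are affine in the opposite statistics with
transposed interaction matrices. -/
theorem stmt_0 {X Z : Type*} [Nonempty X] [Nonempty Z] {n m : ℕ}
    (ν : X → Fin n → ℝ) (ψ : Z → Fin m → ℝ)
    (hν : Submodule.span ℝ (Set.range (fun x => ((ν x, (1 : ℝ)) : (Fin n → ℝ) × ℝ))) = ⊤)
    (hψ : Submodule.span ℝ (Set.range (fun z => ((ψ z, (1 : ℝ)) : (Fin m → ℝ) × ℝ))) = ⊤)
    (f : Z → Fin n → ℝ) (g : X → Fin m → ℝ) (r : Z → ℝ) (s : X → ℝ)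
    (h : ∀ x z, (∑ i, ν x i * f z i) + r z = (∑ j, ψ z j * g x j) + s x) :
    ∃ (W : Matrix (Fin n) (Fin m) ℝ) (u : Fin n → ℝ) (v : Fin m → ℝ),
      (∀ z, f z = W.mulVec (ψ z) + u) ∧ (∀ x, g x = W.transpose.mulVec (ν x) + v) := by
  classical
  obtain ⟨z₀⟩ := (inferInstance : Nonempty Z)
  choose d hd1 hd2 using fun j => span_coeffs ψ hψ j
  choose c hc1 hc2 using fun i => span_coeffs ν hν i
  set W' : Matrix (Fin m) (Fin n) ℝ := fun j i => ∑ z ∈ (d j).support, d j z * f z i with hW'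
  set v : Fin m → ℝ := fun j => ∑ z ∈ (d j).support, d j z * r z with hv
  -- Claim A : g x j = ∑ i, ν x i * W' j i + v j
  have hA : ∀ x j, g x j = (∑ i, ν x i * W' j i) + v j := by
    intro x j
    have h1 : ∑ z ∈ (d j).support, d j z * ((∑ i, ν x i * f z i) + r z)
        = ∑ z ∈ (d j).support, d j z * ((∑ k, ψ z k * g x k) + s x) :=
      Finset.sum_congr rfl fun z _ => by rw [h x z]
    have lhs : ∑ z ∈ (d j).support, d j z * ((∑ i, ν x i * f z i) + r z)
        = (∑ i, ν x i * W' j i) + v j := by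
      calc ∑ z ∈ (d j).support, d j z * ((∑ i, ν x i * f z i) + r z)
          = ∑ z ∈ (d j).support, ((∑ i, ν x i * (d j z * f z i)) + d j z * r z) :=
            Finset.sum_congr rfl fun z _ => by
              rw [mul_add, Finset.mul_sum]
              congr 1
              exact Finset.sum_congr rfl fun i _ => by ring
        _ = (∑ z ∈ (d j).support, ∑ i, ν x i * (d j z * f z i))
              + ∑ z ∈ (d j).support, d j z * r z := Finset.sum_add_distrib
        _ = (∑ i, ∑ z ∈ (d j).support, ν x i * (d j z * f z i)) + v j := by
            rw [Finset.sum_comm]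
        _ = (∑ i, ν x i * W' j i) + v j := by
            congr 1
            exact Finset.sum_congr rfl fun i _ => by
              rw [hW', Finset.mul_sum]
    have rhs : ∑ z ∈ (d j).support, d j z * ((∑ k, ψ z k * g x k) + s x)
        = g x j := by
      calc ∑ z ∈ (d j).support, d j z * ((∑ k, ψ z k * g x k) + s x)
          = ∑ z ∈ (d j).support, ((∑ k, (d j z * ψ z k) * g x k) + d j z * s x) :=
            Finset.sum_congr rfl fun z _ => by
              rw [mul_add, Finset.mul_sum]
              congr 1
              exact Finset.sum_congr rfl fun k _ => by ring
        _ = (∑ z ∈ (d j).support, ∑ k, (d j z * ψ z k) * g x k)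
              + ∑ z ∈ (d j).support, d j z * s x := Finset.sum_add_distrib
        _ = (∑ k, (∑ z ∈ (d j).support, d j z * ψ z k) * g x k)
              + (∑ z ∈ (d j).support, d j z) * s x := by
            rw [Finset.sum_comm]
            congr 1
            · exact Finset.sum_congr rfl fun k _ => (Finset.sum_mul _ _ _).symm
            · exact (Finset.sum_mul _ _ _).symm
        _ = (∑ k, (Pi.single j (1:ℝ) : Fin m → ℝ) k * g x k) + 0 := by
            rw [hd2 j, zero_mul]
            congr 1
            exact Finset.sum_congr rfl fun k _ => by rw [hd1 j k]
        _ = g x j := by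
            simp [Pi.single_apply, ite_mul]
    rw [lhs, rhs] at h1
    exact h1.symm
  -- residual q z := f z - W'ᵀ ψ z
  set q : Z → Fin n → ℝ := fun z i => f z i - ∑ j, W' j i * ψ z j with hqdef
  have hB : ∀ x z, (∑ i, ν x i * q z i)
      = s x - r z + ∑ j, ψ z j * v j := by
    intro x z
    have e2 : (∑ i, ν x i * q z i)
        = (∑ i, ν x i * f z i) - ∑ j, ψ z j * (∑ i, ν x i * W' j i) := by
      calc (∑ i, ν x i * q z i)
          = ∑ i, (ν x i * f z i - ∑ j, ψ z j * (ν x i * W' j i)) :=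
            Finset.sum_congr rfl fun i _ => by
              rw [hqdef, mul_sub, Finset.mul_sum]
              congr 1
              exact Finset.sum_congr rfl fun j _ => by ring
        _ = (∑ i, ν x i * f z i) - ∑ i, ∑ j, ψ z j * (ν x i * W' j i) :=
            Finset.sum_sub_distrib _ _
        _ = (∑ i, ν x i * f z i) - ∑ j, ψ z j * (∑ i, ν x i * W' j i) := by
            rw [Finset.sum_comm]
            congr 1
            exact Finset.sum_congr rfl fun j _ => by
              rw [Finset.mul_sum]
    have hA' : ∑ j, ψ z j * (∑ i, ν x i * W' j i)
        = (∑ j, ψ z j * g x j) - ∑ j, ψ z j * v j := by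
      rw [← Finset.sum_sub_distrib]
      exact Finset.sum_congr rfl fun j _ => by rw [hA x j]; ring
    have hh := h x z
    rw [e2, hA']
    linarith
  -- constancy of q
  have hq : ∀ z, q z = q z₀ := by
    intro z
    funext i
    have hconst : ∀ x, (∑ k, ν x k * (q z k - q z₀ k))
        = (r z₀ - r z) + ((∑ j, ψ z j * v j) - ∑ j, ψ z₀ j * v j) := by
      intro x
      have b1 := hB x z
      have b2 := hB x z₀
      have e3 : (∑ k, ν x k * (q z k - q z₀ k))
          = (∑ k, ν x k * q z k) - ∑ k, ν x k * q z₀ k := by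
        rw [← Finset.sum_sub_distrib]
        exact Finset.sum_congr rfl fun k _ => by ring
      rw [e3, b1, b2]; ring
    have w1 : ∑ x ∈ (c i).support, (c i) x * (∑ k, ν x k * (q z k - q z₀ k)) = 0 := by
      calc ∑ x ∈ (c i).support, (c i) x * (∑ k, ν x k * (q z k - q z₀ k))
          = ∑ x ∈ (c i).support, (c i) x *
              ((r z₀ - r z) + ((∑ j, ψ z j * v j) - ∑ j, ψ z₀ j * v j)) :=
            Finset.sum_congr rfl fun x _ => by rw [hconst x]
        _ = (∑ x ∈ (c i).support, (c i) x) *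
              ((r z₀ - r z) + ((∑ j, ψ z j * v j) - ∑ j, ψ z₀ j * v j)) :=
            (Finset.sum_mul _ _ _).symm
        _ = 0 := by rw [hc2 i, zero_mul]
    have w2 : ∑ x ∈ (c i).support, (c i) x * (∑ k, ν x k * (q z k - q z₀ k))
        = q z i - q z₀ i := by
      calc ∑ x ∈ (c i).support, (c i) x * (∑ k, ν x k * (q z k - q z₀ k))
          = ∑ x ∈ (c i).support, ∑ k, ((c i) x * ν x k) * (q z k - q z₀ k) :=
            Finset.sum_congr rfl fun x _ => by
              rw [Finset.mul_sum]
              exact Finset.sum_congr rfl fun k _ => by ring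
        _ = ∑ k, (∑ x ∈ (c i).support, (c i) x * ν x k) * (q z k - q z₀ k) := by
            rw [Finset.sum_comm]
            exact Finset.sum_congr rfl fun k _ => (Finset.sum_mul _ _ _).symm
        _ = ∑ k, (Pi.single i (1:ℝ) : Fin n → ℝ) k * (q z k - q z₀ k) :=
            Finset.sum_congr rfl fun k _ => by rw [hc1 i k]
        _ = q z i - q z₀ i := by simp [Pi.single_apply, ite_mul]
    have := w2.symm.trans w1
    linarith
  refine ⟨W'.transpose, q z₀, v, ?_, ?_⟩
  · intro z
    funext i
    simp only [Matrix.mulVec, dotProduct, Matrix.transpose_apply, Pi.add_apply]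
    have h1 : q z i = q z₀ i := congrFun (hq z) i
    have h2 : q z i = f z i - ∑ j, W' j i * ψ z j := rfl
    have h3 : q z₀ i = q z₀ i := rfl
    linarith [h1, h2.symm ▸ h1]
  · intro x
    funext j
    simp only [Matrix.transpose_transpose, Matrix.mulVec, dotProduct, Pi.add_apply]
    rw [hA x j]
    congr 1
    exact Finset.sum_congr rfl fun i _ => mul_comm _ _
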